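/- arXiv:1101.2218 — 6 statements merged into one kernel-verified Lean document; each statement's English description precedes it below -/
import Mathlib

section
/- Let X be a normed space over ℝ or ℂ, T ∈ B(X), and S ∈ B(X). Suppose the set E of vectors x for which Sx ∈ {0} ∪ {T^n x : n ≥ 0} is not contained in a countable union of nowhere dense subsets of X. Then S = 0 or S = T^n for some n ≥ 0. -/
lemma ker_meagre {𝕜 : Type*} [RCLike 𝕜] {X : Type*} [NormedAddCommGroup X] [NormedSpace 𝕜 X]
    (f : X →L[𝕜] X) (hf : f ≠ 0) : IsMeagre {x : X | f x = 0} := by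
  have hset : {x : X | f x = 0} = (LinearMap.ker (f : X →ₗ[𝕜] X) : Set X) := rfl
  have hclosed : IsClosed {x : X | f x = 0} := isClosed_eq f.continuous continuous_const
  have hint : interior {x : X | f x = 0} = ∅ := by
    by_contra hne
    have : (LinearMap.ker (f : X →ₗ[𝕜] X) : Submodule 𝕜 X) = ⊤ := by
      apply Submodule.eq_top_of_nonempty_interior'
      rw [← hset]
      exact Set.nonempty_iff_ne_empty.mpr hne
    apply hf
    ext x
    have : x ∈ LinearMap.ker (f : X →ₗ[𝕜] X) := this ▸ Submodule.mem_top
    simpa using this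
  have : IsOpen {x : X | f x = 0}ᶜ ∧ Dense {x : X | f x = 0}ᶜ :=
    isClosed_isNowhereDense_iff_compl.mp ⟨hclosed, hclosed.isNowhereDense_iff.mpr hint⟩
  exact residual_of_dense_open this.1 this.2

theorem stmt_2 {𝕜 : Type*} [RCLike 𝕜] {X : Type*} [NormedAddCommGroup X] [NormedSpace 𝕜 X]
    (T S : X →L[𝕜] X)
    (h : ¬ IsMeagre {x : X | S x = 0 ∨ ∃ n : ℕ, S x = (T ^ n) x}) :
    S = 0 ∨ ∃ n : ℕ, S = T ^ n := by
  by_contra hc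
  push_neg at hc
  obtain ⟨hS0, hSn⟩ := hc
  apply h
  set s : ℕ → Set X := fun n => Nat.rec {x : X | S x = 0}
    (fun m _ => {x : X | (S - T ^ m) x = 0}) n with hs
  have hmeagre : IsMeagre (⋃ n, s n) := by
    apply isMeagre_iUnion
    intro n
    cases n with
    | zero => exact ker_meagre S hS0
    | succ m => exact ker_meagre (S - T ^ m) (sub_ne_zero.mpr (hSn m))
  refine hmeagre.mono ?_
  intro x hx
  rcases hx with h0 | ⟨n, hn⟩
  · exact Set.mem_iUnion.mpr ⟨0, h0⟩
  · exact Set.mem_iUnion.mpr ⟨n + 1, by simp [s, sub_eq_zero, hn]⟩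
end

section
/- Let X be a normed space over ℝ or ℂ and T ∈ B(X) such that ⋂ₙ closure(Tⁿ(X)) = {0}. If x ∈ X, k < n are nonnegative integers, and T^n x = T^k x ≠ 0, then a contradiction follows; i.e., for every x and k < n, T^n x = T^k x implies T^k x = 0. -/
theorem stmt_6 {𝕜 : Type*} [RCLike 𝕜] {X : Type*} [NormedAddCommGroup X] [NormedSpace 𝕜 X]
    (T : X →L[𝕜] X)
    (h : (⋂ n : ℕ, closure (Set.range (⇑(T ^ (n + 1))))) = {0}) :
    ∀ (x : X) (k n : ℕ), k < n → (T ^ n) x = (T ^ k) x → (T ^ k) x = 0 := by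
  intro x k n hkn hTn
  set y := (T ^ k) x with hy
  have hd : 0 < n - k := Nat.sub_pos_of_lt hkn
  have h1 : (T ^ (n - k)) y = y := by
    rw [hy, ← ContinuousLinearMap.mul_apply, ← pow_add, Nat.sub_add_cancel hkn.le, hTn]
  have hm : ∀ m : ℕ, (T ^ (m * (n - k))) y = y := by
    intro m
    induction m with
    | zero => simp
    | succ m ih =>
      rw [Nat.succ_mul, pow_add, ContinuousLinearMap.mul_apply, h1, ih]
  have hy0 : y ∈ ⋂ j : ℕ, closure (Set.range (⇑(T ^ (j + 1)))) := by
    refine Set.mem_iInter.2 fun j => subset_closure ?_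
    have hle : j + 1 ≤ (j + 1) * (n - k) := Nat.le_mul_of_pos_right _ hd
    refine ⟨(T ^ ((j + 1) * (n - k) - (j + 1))) y, ?_⟩
    rw [← ContinuousLinearMap.mul_apply, ← pow_add, Nat.add_sub_cancel' hle, hm]
  rw [h] at hy0
  exact hy0
end

section
/- Let A be a bounded operator on a Hilbert space with A^n → 0 in the weak operator topology, and let y be a vector, s ≥ 0 an integer with A^s y ≠ 0. If (n_k) is a sequence of nonnegative integers with A^{n_k} y → A^s y in norm, then n_k = s for all sufficiently large k. -/
theorem stmt_10 {H : Type*} [NormedAddCommGroup H] [InnerProductSpace ℂ H] [CompleteSpace H]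
    (A : H →L[ℂ] H)
    (hWOT : ∀ x y : H,
      Filter.Tendsto (fun n : ℕ => (inner ℂ ((A ^ n) x) y : ℂ)) Filter.atTop (nhds 0))
    (y : H) (s : ℕ) (hs : (A ^ s) y ≠ 0)
    (n : ℕ → ℕ)
    (hconv : Filter.Tendsto (fun k : ℕ => (A ^ n k) y) Filter.atTop (nhds ((A ^ s) y))) :
    ∀ᶠ k in Filter.atTop, n k = s := by
  classical
  by_contra hcon
  rw [Filter.not_eventually] at hcon
  set x := (A ^ s) y with hxdef
  have hxpos : (0 : ℝ) < ‖x‖ ^ 2 := by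
    have : 0 < ‖x‖ := norm_pos_iff.mpr hs
    positivity
  -- inner products along the sequence converge to ⟪x, x⟫
  have hinner : Filter.Tendsto (fun k => (inner ℂ ((A ^ n k) y) x : ℂ)) Filter.atTop
      (nhds (inner ℂ x x)) := hconv.inner tendsto_const_nhds
  have hWy : Filter.Tendsto (fun m : ℕ => (inner ℂ ((A ^ m) y) x : ℂ)) Filter.atTop (nhds 0) :=
    hWOT y x
  have hxx : ‖(inner ℂ x x : ℂ)‖ = ‖x‖ ^ 2 := by
    rw [inner_self_eq_norm_sq_to_K]
    simp [abs_of_nonneg (norm_nonneg x)]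
  set ε : ℝ := ‖x‖ ^ 2 / 2 with hε
  have hεpos : 0 < ε := by positivity
  have h1 : ∀ᶠ m in Filter.atTop, ‖(inner ℂ ((A ^ m) y) x : ℂ)‖ < ε := by
    have := hWy.norm
    simp only [norm_zero] at this
    exact this.eventually_lt_const hεpos
  have h2 : ∀ᶠ k in Filter.atTop, ε < ‖(inner ℂ ((A ^ n k) y) x : ℂ)‖ := by
    have := hinner.norm
    rw [hxx] at this
    exact this.eventually_const_lt (by rw [hε]; linarith)
  obtain ⟨N, hN⟩ := Filter.eventually_atTop.mp h1
  have hbound : ∀ᶠ k in Filter.atTop, n k < N := by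
    filter_upwards [h2] with k hk
    by_contra h
    exact absurd (hN _ (le_of_not_gt h)) (not_lt.mpr hk.le)
  have hfreq : ∃ᶠ k in Filter.atTop, n k ≠ s ∧ n k < N := hcon.and_eventually hbound
  have hS : {k | n k ≠ s ∧ n k < N}.Infinite :=
    Nat.frequently_atTop_iff_infinite.mp hfreq
  obtain ⟨m, hmN, hms, hm⟩ : ∃ m, m < N ∧ m ≠ s ∧ {k | n k = m}.Infinite := by
    by_contra h
    push_neg at h
    apply hS
    have hsub : {k | n k ≠ s ∧ n k < N} ⊆
        ⋃ m ∈ Finset.range N, {k | n k = m ∧ n k ≠ s} := by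
      intro k hk
      simp only [Set.mem_iUnion, Finset.mem_range, Set.mem_setOf_eq]
      exact ⟨n k, hk.2, rfl, hk.1⟩
    apply Set.Finite.subset _ hsub
    apply Set.Finite.biUnion (Finset.range N).finite_toSet
    intro m hm
    rw [Finset.mem_coe, Finset.mem_range] at hm
    by_cases hmse : m = s
    · apply Set.Finite.subset Set.finite_empty
      intro k hk
      exact absurd (hmse ▸ hk.1) hk.2
    · have hfin : ¬ {k | n k = m}.Infinite := fun hinf => hinf (h m hm hmse)
      rw [Set.not_infinite] at hfin
      exact hfin.subset fun k hk => hk.1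
  -- along the fiber, the limit is A^m y, hence A^m y = A^s y
  haveI hne : (Filter.atTop ⊓ Filter.principal {k | n k = m}).NeBot :=
    Filter.frequently_iff_neBot.mp (Nat.frequently_atTop_iff_infinite.mpr hm)
  have heq : (A ^ m) y = (A ^ s) y := by
    have ht1 : Filter.Tendsto (fun k : ℕ => (A ^ n k) y)
        (Filter.atTop ⊓ Filter.principal {k | n k = m}) (nhds ((A ^ s) y)) :=
      hconv.mono_left inf_le_left
    have ht2 : Filter.Tendsto (fun k : ℕ => (A ^ n k) y)
        (Filter.atTop ⊓ Filter.principal {k | n k = m}) (nhds ((A ^ m) y)) := by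
      apply Filter.Tendsto.congr' _ tendsto_const_nhds
      rw [Filter.eventuallyEq_inf_principal_iff]
      filter_upwards with k hk
      rw [hk]
    exact tendsto_nhds_unique ht2 ht1
  -- get d > 0 with A^d x = x
  obtain ⟨d, hd0, hdx⟩ : ∃ d, 0 < d ∧ (A ^ d) x = x := by
    rcases lt_or_gt_of_ne hms with h | h
    · refine ⟨s - m, by omega, ?_⟩
      rw [hxdef]
      conv_lhs => rw [← heq]
      rw [← ContinuousLinearMap.mul_apply, ← pow_add, Nat.sub_add_cancel h.le]
    · refine ⟨m - s, by omega, ?_⟩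
      rw [hxdef, ← ContinuousLinearMap.mul_apply, ← pow_add, Nat.sub_add_cancel h.le]
      exact heq
  have hpow : ∀ j : ℕ, (A ^ (d * j)) x = x := by
    intro j
    induction j with
    | zero => simp
    | succ j ih =>
      rw [Nat.mul_succ, pow_add, ContinuousLinearMap.mul_apply, hdx, ih]
  have hmono : StrictMono (fun j : ℕ => d * j) := fun a b hab => by
    exact mul_lt_mul_of_pos_left hab hd0
  have hcomp : Filter.Tendsto (fun j : ℕ => (inner ℂ ((A ^ (d * j)) x) x : ℂ))
      Filter.atTop (nhds 0) := (hWOT x x).comp hmono.tendsto_atTop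
  have hconst : Filter.Tendsto (fun j : ℕ => (inner ℂ ((A ^ (d * j)) x) x : ℂ))
      Filter.atTop (nhds (inner ℂ x x)) := by
    apply Filter.Tendsto.congr _ tendsto_const_nhds
    intro j; rw [hpow j]
  have : (inner ℂ x x : ℂ) = 0 := tendsto_nhds_unique hconst hcomp
  exact hs (inner_self_eq_zero.mp this)
end

section
/- Let X be a real or complex normed space and T ∈ B(X) such that M = ⋃_{n≥1} ker(Tⁿ) is dense in X. If S ∈ B(X) satisfies Sx ∈ closure({0} ∪ {T^n x : n ≥ 0}) for every x ∈ X, then S = 0 or S = T^k for some k ≥ 0. -/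
section AuxStmt12

variable {𝕜 : Type*} [RCLike 𝕜] {X : Type*} [NormedAddCommGroup X] [NormedSpace 𝕜 X]

private lemma auxZero12 (T : X →L[𝕜] X) {x : X} {N n : ℕ} (hN : (T ^ N) x = 0) (h : N ≤ n) :
    (T ^ n) x = 0 := by
  obtain ⟨m, rfl⟩ := Nat.exists_eq_add_of_le h
  rw [add_comm, pow_add, ContinuousLinearMap.mul_apply, hN, map_zero]

private lemma auxIterate12 (T : X →L[𝕜] X) {v : X} {d : ℕ} (hv : (T ^ d) v = v) (m : ℕ) :
    (T ^ (m * d)) v = v := by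
  induction m with
  | zero => simp
  | succ m ih =>
      rw [Nat.succ_mul, pow_add, ContinuousLinearMap.mul_apply, hv, ih]

private lemma auxInj12 (T : X →L[𝕜] X) {x : X} {N : ℕ} (hN : (T ^ N) x = 0) {a b : ℕ}
    (ha : (T ^ a) x ≠ 0) (h : (T ^ a) x = (T ^ b) x) : a = b := by
  have key : ∀ a b : ℕ, a < b → (T ^ a) x = (T ^ b) x → (T ^ a) x = 0 := by
    intro a b hab heq
    have hd : (T ^ (b - a)) ((T ^ a) x) = (T ^ a) x := by
      rw [← ContinuousLinearMap.mul_apply, ← pow_add, Nat.sub_add_cancel hab.le, ← heq]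
    have hNv : (T ^ N) ((T ^ a) x) = 0 := by
      rw [← ContinuousLinearMap.mul_apply, ← pow_add]
      exact auxZero12 T hN (Nat.le_add_right N a)
    have h1 : (T ^ (N * (b - a))) ((T ^ a) x) = (T ^ a) x := auxIterate12 T hd N
    have h2 : (T ^ (N * (b - a))) ((T ^ a) x) = 0 :=
      auxZero12 T hNv (Nat.le_mul_of_pos_right N (by omega))
    rw [h1] at h2
    exact h2
  rcases lt_trichotomy a b with h1 | h1 | h1
  · exact absurd (key a b h1 h) ha
  · exact h1
  · exact absurd (key b a h1 h.symm) (h ▸ ha)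

private lemma auxMem12 (T S : X →L[𝕜] X)
    (hS : ∀ x : X, S x ∈ closure ({0} ∪ {y : X | ∃ n : ℕ, y = (T ^ n) x}))
    {x : X} {N : ℕ} (hN : (T ^ N) x = 0) :
    S x = 0 ∨ ∃ n ≤ N, S x = (T ^ n) x := by
  classical
  set G : Set X := insert 0 ((fun n => (T ^ n) x) '' Set.Iic N) with hG
  have hGfin : G.Finite := ((Set.finite_Iic N).image _).insert 0
  have hsub : ({0} ∪ {y : X | ∃ n : ℕ, y = (T ^ n) x}) ⊆ G := by
    rintro y (rfl | ⟨n, rfl⟩)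
    · exact Set.mem_insert _ _
    · by_cases hn : n ≤ N
      · exact Set.mem_insert_of_mem _ ⟨n, hn, rfl⟩
      · rw [auxZero12 T hN (le_of_not_ge hn)]
        exact Set.mem_insert _ _
  have hmem : S x ∈ G := closure_minimal hsub hGfin.isClosed (hS x)
  rcases Set.mem_insert_iff.mp hmem with h | h
  · exact Or.inl h
  · obtain ⟨n, hn, h⟩ := h
    exact Or.inr ⟨n, hn, h.symm⟩

end AuxStmt12

theorem stmt_12 {𝕜 : Type*} [RCLike 𝕜] {X : Type*} [NormedAddCommGroup X] [NormedSpace 𝕜 X]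
    (T S : X →L[𝕜] X)
    (hdense : Dense (⋃ n : ℕ, {x : X | (T ^ (n + 1)) x = 0}))
    (hS : ∀ x : X, S x ∈ closure ({0} ∪ {y : X | ∃ n : ℕ, y = (T ^ n) x})) :
    S = 0 ∨ ∃ k : ℕ, S = T ^ k := by
  classical
  set M : Set X := ⋃ n : ℕ, {x : X | (T ^ (n + 1)) x = 0} with hM
  have hMnil : ∀ x ∈ M, ∃ N : ℕ, (T ^ N) x = 0 := by
    intro x hx
    simp only [hM, Set.mem_iUnion, Set.mem_setOf_eq] at hx
    obtain ⟨n, hn⟩ := hx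
    exact ⟨n + 1, hn⟩
  -- uniformity of the exponent
  have uniq : ∀ (x y : X) (Nx Ny : ℕ), (T ^ Nx) x = 0 → (T ^ Ny) y = 0 →
      ∀ a b : ℕ, S x = (T ^ a) x → (T ^ a) x ≠ 0 → S y = (T ^ b) y → (T ^ b) y ≠ 0 → a = b := by
    intro x y Nx Ny hNx hNy a b hax hax0 hby hby0
    set N : ℕ := max Nx Ny with hN
    have hNx' : (T ^ N) x = 0 := auxZero12 T hNx (le_max_left _ _)
    have hNy' : (T ^ N) y = 0 := auxZero12 T hNy (le_max_right _ _)
    have hz : ∀ t : 𝕜, (T ^ N) (x + t • y) = 0 := fun t => by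
      rw [map_add, map_smul, hNx', hNy', smul_zero, add_zero]
    have hout : ∀ t : 𝕜, S (x + t • y) = 0 ∨ ∃ c ≤ N, S (x + t • y) = (T ^ c) (x + t • y) :=
      fun t => auxMem12 T S hS (hz t)
    set g : ℕ → ℕ := fun i =>
      if S (x + (i : 𝕜) • y) = 0 then N + 1
      else sInf {c | S (x + (i : 𝕜) • y) = (T ^ c) (x + (i : 𝕜) • y)} with hg
    have hval : ∀ i : ℕ, S (x + (i : 𝕜) • y) = 0 → g i = N + 1 := by
      intro i h
      simp only [hg]
      rw [if_pos h]
    have hspec : ∀ i : ℕ, S (x + (i : 𝕜) • y) ≠ 0 →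
        S (x + (i : 𝕜) • y) = (T ^ (g i)) (x + (i : 𝕜) • y) ∧ g i ≤ N := by
      intro i hi
      rcases hout (i : 𝕜) with hh | ⟨c, hc, hc'⟩
      · exact absurd hh hi
      · have hne : Set.Nonempty {c | S (x + (i : 𝕜) • y) = (T ^ c) (x + (i : 𝕜) • y)} := ⟨c, hc'⟩
        have hmem := Nat.sInf_mem hne
        have hle : sInf {c | S (x + (i : 𝕜) • y) = (T ^ c) (x + (i : 𝕜) • y)} ≤ c :=
          Nat.sInf_le hc'
        have hgi : g i = sInf {c | S (x + (i : 𝕜) • y) = (T ^ c) (x + (i : 𝕜) • y)} := by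
          simp only [hg]
          rw [if_neg hi]
        rw [hgi]
        exact ⟨hmem, le_trans hle hc⟩
    have hmaps : ∀ i ∈ Finset.range (N + 3), g i ∈ Finset.range (N + 2) := by
      intro i _
      simp only [Finset.mem_range]
      by_cases h : S (x + (i : 𝕜) • y) = 0
      · rw [hval i h]; omega
      · have := (hspec i h).2; omega
    obtain ⟨i, hi, j, hj, hij, hgij⟩ :=
      Finset.exists_ne_map_eq_of_card_lt_of_maps_to
        (by simp [Finset.card_range]) hmaps
    have hts : (i : 𝕜) ≠ (j : 𝕜) := fun h => hij (Nat.cast_injective h)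
    by_cases h0 : S (x + (i : 𝕜) • y) = 0
    · -- both outcomes are zero: contradiction with S y ≠ 0
      have h0' : S (x + (j : 𝕜) • y) = 0 := by
        by_contra hh
        have h1 := hval i h0
        have h2 := (hspec j hh).2
        omega
      have e1 : S x + (i : 𝕜) • S y = 0 := by
        rw [← map_smul, ← map_add]; exact h0
      have e2 : S x + (j : 𝕜) • S y = 0 := by
        rw [← map_smul, ← map_add]; exact h0'
      have h5 : (i : 𝕜) • S y = (j : 𝕜) • S y := add_left_cancel (e1.trans e2.symm)
      have h7 : ((i : 𝕜) - (j : 𝕜)) • S y = 0 := by rw [sub_smul, h5, sub_self]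
      rcases smul_eq_zero.mp h7 with h | h
      · exact absurd (sub_eq_zero.mp h) hts
      · exact absurd (hby.symm.trans h) hby0
    · have h0' : S (x + (j : 𝕜) • y) ≠ 0 := by
        intro hh
        have h1 := hval j hh
        have h2 := (hspec i h0).2
        omega
      obtain ⟨hi1, _⟩ := hspec i h0
      obtain ⟨hj1, _⟩ := hspec j h0'
      rw [hgij] at hi1
      have e1 : S x + (i : 𝕜) • S y = (T ^ (g j)) x + (i : 𝕜) • (T ^ (g j)) y := by
        rw [← map_smul, ← map_add, ← map_smul, ← map_add]; exact hi1
      have e2 : S x + (j : 𝕜) • S y = (T ^ (g j)) x + (j : 𝕜) • (T ^ (g j)) y := by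
        rw [← map_smul, ← map_add, ← map_smul, ← map_add]; exact hj1
      have h12 : (S x + (i : 𝕜) • S y) - (S x + (j : 𝕜) • S y)
          = ((T ^ (g j)) x + (i : 𝕜) • (T ^ (g j)) y)
            - ((T ^ (g j)) x + (j : 𝕜) • (T ^ (g j)) y) := by
        rw [e1, e2]
      rw [add_sub_add_left_eq_sub, add_sub_add_left_eq_sub, ← sub_smul, ← sub_smul] at h12
      have e3 : S y = (T ^ (g j)) y :=
        smul_right_injective X (sub_ne_zero.mpr hts) h12
      have hbgj : b = g j := auxInj12 T hNy' hby0 (hby.symm.trans e3)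
      have e5 : S x = (T ^ (g j)) x := by
        rw [e3] at e1
        exact add_right_cancel e1
      have hagj : a = g j := auxInj12 T hNx' hax0 (hax.symm.trans e5)
      exact hagj.trans hbgj.symm
  by_cases hz : ∀ x ∈ M, S x = 0
  · left
    have hEq : Set.EqOn (⇑S) (⇑(0 : X →L[𝕜] X)) M := fun x hx => by
      simp [hz x hx]
    exact DFunLike.coe_injective
      (Continuous.ext_on hdense S.continuous (0 : X →L[𝕜] X).continuous hEq)
  · push_neg at hz
    obtain ⟨y₀, hy₀M, hy₀⟩ := hz
    obtain ⟨Ny, hNy⟩ := hMnil y₀ hy₀M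
    rcases auxMem12 T S hS hNy with h | ⟨k, _, hk'⟩
    · exact absurd h hy₀
    right
    refine ⟨k, ?_⟩
    have hk0 : (T ^ k) y₀ ≠ 0 := hk' ▸ hy₀
    have key : ∀ x : X, ∀ Nx : ℕ, (T ^ Nx) x = 0 → S x = (T ^ k) x := by
      intro x Nx hNx
      by_cases hx0 : S x = 0
      · have hNz : (T ^ (max Nx Ny)) (x + y₀) = 0 := by
          rw [map_add, auxZero12 T hNx (le_max_left _ _),
            auxZero12 T hNy (le_max_right _ _), add_zero]
        have hSz : S (x + y₀) = (T ^ k) y₀ := by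
          rw [map_add, hx0, hk', zero_add]
        have hSz0 : S (x + y₀) ≠ 0 := by rw [hSz]; exact hk0
        rcases auxMem12 T S hS hNz with h2 | ⟨c, _, hc'⟩
        · exact absurd h2 hSz0
        · have hc0 : (T ^ c) (x + y₀) ≠ 0 := hc' ▸ hSz0
          have hck : c = k := uniq (x + y₀) y₀ _ _ hNz hNy c k hc' hc0 hk' hk0
          have heq : (T ^ k) y₀ = (T ^ k) x + (T ^ k) y₀ := by
            conv_lhs => rw [← hSz, hc', hck, map_add]
          have hTkx : (T ^ k) x = 0 := (right_eq_add.mp heq)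
          rw [hx0, hTkx]
      · rcases auxMem12 T S hS hNx with h | ⟨a, _, ha'⟩
        · exact absurd h hx0
        · have ha0 : (T ^ a) x ≠ 0 := ha' ▸ hx0
          have hak : a = k := uniq x y₀ _ _ hNx hNy a k ha' ha0 hk' hk0
          rw [ha', hak]
    have hEq : Set.EqOn (⇑S) (⇑(T ^ k)) M := fun x hx => by
      obtain ⟨Nx, hNx⟩ := hMnil x hx
      exact key x Nx hNx
    exact DFunLike.coe_injective
      (Continuous.ext_on hdense S.continuous (T ^ k).continuous hEq)
end

section
/- Let X be a normed space and T ∈ B(X) a bounded operator such that for every x ∈ X either T^n x → 0 weakly or ‖T^n x‖ → ∞. Then for every x ∈ X, the set {0} ∪ {T^n x : n ≥ 0} is norm closed. -/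
theorem stmt_13 {𝕜 : Type*} [RCLike 𝕜] {X : Type*} [NormedAddCommGroup X] [NormedSpace 𝕜 X]
    (T : X →L[𝕜] X)
    (h : ∀ x : X,
      (∀ f : X →L[𝕜] 𝕜,
        Filter.Tendsto (fun n : ℕ => f ((T ^ n) x)) Filter.atTop (nhds 0)) ∨
      Filter.Tendsto (fun n : ℕ => ‖(T ^ n) x‖) Filter.atTop Filter.atTop) :
    ∀ x : X, IsClosed ({0} ∪ {y : X | ∃ n : ℕ, y = (T ^ n) x}) := by
  intro x
  set S : Set X := {0} ∪ {y : X | ∃ n : ℕ, y = (T ^ n) x} with hS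
  rw [← closure_subset_iff_isClosed]
  intro y hy
  by_cases hy0 : y = 0
  · left; simp [hy0]
  have hnorm : 0 < ‖y‖ := norm_pos_iff.mpr hy0
  obtain ⟨N, hN⟩ : ∃ N : ℕ, ∀ n ≥ N, ‖y‖ / 2 ≤ ‖(T ^ n) x - y‖ := by
    rcases h x with hw | hs
    · obtain ⟨f, hf1, hfy⟩ := exists_dual_vector 𝕜 y (norm_ne_zero_iff.mpr hy0)
      have h2 : ∀ᶠ n in Filter.atTop, ‖f ((T ^ n) x)‖ < ‖y‖ / 2 := by
        have := (hw f).norm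
        have h0 : ‖(0:𝕜)‖ < ‖y‖ / 2 := by rw [norm_zero]; linarith
        simpa using this.eventually_lt_const h0
      obtain ⟨N, hN⟩ := h2.exists_forall_of_atTop
      refine ⟨N, fun n hn => ?_⟩
      have h3 := hN n hn
      have hfyn : ‖f y‖ = ‖y‖ := by rw [hfy]; simp
      have h4 : ‖f y - f ((T ^ n) x)‖ ≤ ‖(T ^ n) x - y‖ := by
        rw [← map_sub]
        calc ‖f (y - (T ^ n) x)‖ ≤ ‖f‖ * ‖y - (T ^ n) x‖ := f.le_opNorm _
          _ = ‖(T ^ n) x - y‖ := by rw [hf1, one_mul, norm_sub_rev]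
      have h5 : ‖f y‖ - ‖f ((T ^ n) x)‖ ≤ ‖f y - f ((T ^ n) x)‖ :=
        norm_sub_norm_le _ _
      linarith [hfyn ▸ h5]
    · have h2 : ∀ᶠ n in Filter.atTop, (2 : ℝ) * ‖y‖ ≤ ‖(T ^ n) x‖ :=
        hs.eventually_ge_atTop _
      obtain ⟨N, hN⟩ := h2.exists_forall_of_atTop
      refine ⟨N, fun n hn => ?_⟩
      have := hN n hn
      have h6 : ‖(T ^ n) x‖ - ‖y‖ ≤ ‖(T ^ n) x - y‖ := norm_sub_norm_le _ _
      linarith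
  -- y is in the closure of the finite set of early orbit points
  have hF : y ∈ closure ((fun n : ℕ => (T ^ n) x) '' Set.Iio N) := by
    rw [Metric.mem_closure_iff]
    intro ε hε
    have hε' : 0 < min ε (‖y‖ / 2) := lt_min hε (by linarith)
    obtain ⟨s, hsS, hds⟩ := Metric.mem_closure_iff.mp hy _ hε'
    have hds2 : dist y s < ‖y‖ / 2 := lt_of_lt_of_le hds (min_le_right _ _)
    rcases hsS with hs0 | ⟨n, rfl⟩
    · exfalso
      rw [Set.mem_singleton_iff.mp hs0, dist_zero_right] at hds2
      linarith
    · have hnN : n < N := by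
        by_contra hc
        have := hN n (le_of_not_gt hc)
        rw [dist_eq_norm, norm_sub_rev] at hds2
        linarith
      exact ⟨_, ⟨n, hnN, rfl⟩, lt_of_lt_of_le hds (min_le_left _ _)⟩
  have hfin : ((fun n : ℕ => (T ^ n) x) '' Set.Iio N).Finite :=
    (Set.finite_Iio N).image _
  rw [hfin.isClosed.closure_eq] at hF
  obtain ⟨n, _, rfl⟩ := hF
  exact Or.inr ⟨n, rfl⟩
end

section
/- Let N be a normal operator on a complex Hilbert space H and S ∈ B(H) such that for every x ∈ H, Sx lies in the norm closure of {0} ∪ {N^n x : n ≥ 0}. Then S commutes with N. -/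
open ContinuousLinearMap in
theorem adj_norm {H : Type*} [NormedAddCommGroup H] [InnerProductSpace ℂ H] [CompleteSpace H]
    (N : H →L[ℂ] H) (hN : IsStarNormal N) (v : H) : ‖adjoint N v‖ = ‖N v‖ := by
  have hc : N * adjoint N = adjoint N * N := by
    have := hN.star_comm_self.eq
    rw [star_eq_adjoint] at this
    exact this.symm
  have h1 : (inner ℂ (adjoint N v) (adjoint N v) : ℂ) = inner ℂ (N v) (N v) := by
    rw [adjoint_inner_left]
    have h2 : N (adjoint N v) = adjoint N (N v) := by
      have := congrArg (fun T : H →L[ℂ] H => T v) hc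
      simpa [mul_apply] using this
    rw [h2, adjoint_inner_right]
  rw [inner_self_eq_norm_sq_to_K, inner_self_eq_norm_sq_to_K] at h1
  have h3 : ‖adjoint N v‖ ^ 2 = ‖N v‖ ^ 2 := by exact_mod_cast h1
  nlinarith [norm_nonneg (adjoint N v), norm_nonneg (N v)]

open ContinuousLinearMap in
theorem logcx {H : Type*} [NormedAddCommGroup H] [InnerProductSpace ℂ H] [CompleteSpace H]
    (N : H →L[ℂ] H) (hN : IsStarNormal N) (v : H) : ‖N v‖ ^ 2 ≤ ‖v‖ * ‖N (N v)‖ := by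
  have h1 : (inner ℂ (N v) (N v) : ℂ) = inner ℂ v (adjoint N (N v)) := by
    rw [adjoint_inner_right]
  have h2 : ‖N v‖ ^ 2 = (inner ℂ v (adjoint N (N v)) : ℂ).re := by
    rw [← h1, inner_self_eq_norm_sq_to_K]; norm_cast
  calc ‖N v‖ ^ 2 = (inner ℂ v (adjoint N (N v)) : ℂ).re := h2
    _ ≤ ‖(inner ℂ v (adjoint N (N v)) : ℂ)‖ := Complex.re_le_norm _
    _ ≤ ‖v‖ * ‖adjoint N (N v)‖ := norm_inner_le_norm _ _
    _ = ‖v‖ * ‖N (N v)‖ := by rw [adj_norm N hN]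

open Filter in
theorem exists_lim {r : ℕ → ℝ} (h0 : ∀ n, 0 ≤ r n) (hcx : ∀ n, r (n+1)^2 ≤ r n * r (n+2))
    (B : ℝ) (hB : ∀ M : ℕ, ∃ m, M ≤ m ∧ r m ≤ B) :
    ∃ l, Tendsto r atTop (nhds l) := by
  have step : ∀ n, r n ≤ r (n+1) → r (n+1) ≤ r (n+2) := by
    intro n hn
    rcases eq_or_lt_of_le (h0 (n+1)) with h | h
    · rw [← h]; exact h0 (n+2)
    · nlinarith [hcx n, h0 (n+2)]
  by_cases hP : ∃ K, r K ≤ r (K+1)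
  · obtain ⟨K, hK⟩ := hP
    have hmono : Monotone (fun j => r (j + K)) := by
      apply monotone_nat_of_le_succ
      intro j
      induction j with
      | zero => simpa [Nat.add_comm] using hK
      | succ i ih =>
        have ih' : r (i + K) ≤ r (i + K + 1) := by
          have e : i + 1 + K = i + K + 1 := by omega
          rw [e] at ih; exact ih
        have := step (i + K) ih'
        have e1 : i + 1 + K = i + K + 1 := by omega
        have e2 : i + 1 + 1 + K = i + K + 1 + 1 := by omega
        rw [e1, e2]; exact this
    rcases tendsto_of_monotone hmono with hT | ⟨l, hl⟩
    · exfalso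
      have hT' : Tendsto r atTop atTop := (tendsto_add_atTop_iff_nat K).mp hT
      obtain ⟨M, hM⟩ := (tendsto_atTop_atTop.mp hT') (B + 1)
      obtain ⟨m, hm, hmB⟩ := hB M
      have := hM m hm
      linarith
    · exact ⟨l, (tendsto_add_atTop_iff_nat K).mp hl⟩
  · push_neg at hP
    have hanti : Antitone r := antitone_nat_of_succ_le (fun n => (hP n).le)
    rcases tendsto_of_antitone hanti with hT | hl
    · exfalso
      obtain ⟨M, hM⟩ := (tendsto_atTop_atBot.mp hT) (-1)
      have := hM M le_rfl
      have := h0 M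
      linarith
    · exact hl


set_option maxHeartbeats 1000000 in
open ContinuousLinearMap Filter Metric in
theorem key {H : Type*} [NormedAddCommGroup H] [InnerProductSpace ℂ H] [CompleteSpace H]
    (N S : H →L[ℂ] H) (hN : IsStarNormal N)
    (hS : ∀ x : H, S x ∈ closure ({0} ∪ {y : H | ∃ n : ℕ, y = (N ^ n) x}))
    (x : H) (hx0 : S x ≠ 0) (hxm : ∀ m : ℕ, S x ≠ (N ^ m) x) :
    S (N x) = N (S x) := by
  set α : H := S x with hα
  set β : H := S (N x) with hβ
  set r : ℕ → ℝ := fun n => ‖(N ^ n) x‖ with hr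
  set t₀ : ℝ := (2 * (‖N‖ + 1))⁻¹ with ht₀def
  have ht₀ : 0 < t₀ := by positivity
  set A : ℂ → (H →L[ℂ] H) := fun t => 1 + t • N with hA
  have hAunit : ∀ t : ℂ, ‖t‖ < t₀ → IsUnit (A t) := by
    intro t ht
    have h1 : ‖-(t • N)‖ < 1 := by
      rw [norm_neg, norm_smul]
      have hN1 : ‖N‖ ≤ ‖N‖ + 1 := by linarith
      have : ‖t‖ * ‖N‖ < t₀ * (‖N‖ + 1) := by
        nlinarith [norm_nonneg t, norm_nonneg N]
      have h2 : t₀ * (‖N‖ + 1) ≤ 1 := by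
        rw [ht₀def]
        rw [inv_mul_le_iff₀ (by positivity)]
        nlinarith [norm_nonneg N]
      linarith
    have := (Units.oneSub (-(t • N)) h1).isUnit
    simpa [sub_neg_eq_add, hA] using this
  set P : ℂ → (H →L[ℂ] H) := fun t => Ring.inverse (A t) with hP
  have hAP : ∀ t : ℂ, ‖t‖ < t₀ → ∀ v : H, A t (P t v) = v := by
    intro t ht v
    have : A t * P t = 1 := Ring.mul_inverse_cancel (A t) (hAunit t ht)
    calc A t (P t v) = (A t * P t) v := rfl
      _ = v := by rw [this]; rfl
  have hPA : ∀ t : ℂ, ‖t‖ < t₀ → ∀ v : H, P t (A t v) = v := by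
    intro t ht v
    have : P t * A t = 1 := Ring.inverse_mul_cancel (A t) (hAunit t ht)
    calc P t (A t v) = (P t * A t) v := rfl
      _ = v := by rw [this]; rfl
  have hAinj : ∀ t : ℂ, ‖t‖ < t₀ → ∀ v w : H, A t v = A t w → v = w := by
    intro t ht v w hvw
    have := congrArg (P t) hvw
    rwa [hPA t ht, hPA t ht] at this
  have hpow : ∀ n : ℕ, (N ^ (n+1)) x = N ((N ^ n) x) := by
    intro n
    rw [pow_succ']
    rfl
  have horb : ∀ (n : ℕ) (t : ℂ), (N ^ n) (x + t • N x) = A t ((N ^ n) x) := by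
    intro n t
    have h1 : (N ^ n) (N x) = N ((N ^ n) x) := by
      have : N ^ n * N = N * N ^ n := by
        exact pow_mul_comm' N n ▸ rfl
      calc (N ^ n) (N x) = (N ^ n * N) x := rfl
        _ = (N * N ^ n) x := by rw [this]
        _ = N ((N ^ n) x) := rfl
    simp [hA, map_add, map_smul, h1, ContinuousLinearMap.add_apply, ContinuousLinearMap.smul_apply]
  have hSlin : ∀ t : ℂ, S (x + t • N x) = α + t • β := by
    intro t
    rw [map_add, map_smul, hα, hβ]
  have hAv : ∀ (t : ℂ) (v : H), A t v = v + t • N v := by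
    intro t v
    simp [hA, ContinuousLinearMap.add_apply, ContinuousLinearMap.smul_apply]
  set Bad : Set ℂ := {t | α + t • β = 0} ∪
      ⋃ m : ℕ, {t | α + t • β = (N ^ m) x + t • N ((N ^ m) x)} with hBadDef
  have hsub : ∀ (a b c d : H), a ≠ c → {t : ℂ | a + t • b = c + t • d}.Subsingleton := by
    intro a b c d hac t1 ht1 t2 ht2
    by_contra hne
    have h1 : a + t1 • b = c + t1 • d := ht1
    have h2 : a + t2 • b = c + t2 • d := ht2
    have h3 : (t1 - t2) • (b - d) = (a + t1 • b) - (a + t2 • b) -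
        ((c + t1 • d) - (c + t2 • d)) := by module
    rw [h1, h2] at h3
    simp only [sub_self] at h3
    rcases smul_eq_zero.mp h3 with h4 | h4
    · exact hne (sub_eq_zero.mp h4)
    · have hbd : b = d := sub_eq_zero.mp h4
      rw [hbd] at h1
      exact hac (by exact add_right_cancel h1)
  have hBadc : Bad.Countable := by
    apply Set.Countable.union
    · have : {t : ℂ | α + t • β = 0}.Subsingleton := by
        have := hsub α β 0 0 hx0
        simpa using this
      exact this.countable
    · exact Set.countable_iUnion
        (fun m => (hsub α β ((N ^ m) x) (N ((N ^ m) x)) (hxm m)).countable)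
  have hq : ∀ t : ℂ, t ∉ Bad → ∀ ε > 0, ∀ M : ℕ,
      ∃ m, M ≤ m ∧ ‖A t ((N ^ m) x) - (α + t • β)‖ < ε := by
    intro t htB ε hε M
    by_contra hcon
    push_neg at hcon
    set F : Finset ℝ := insert ε (insert ‖α + t • β‖
      ((Finset.range M).image (fun m => ‖α + t • β - A t ((N ^ m) x)‖))) with hF
    have hFne : F.Nonempty := ⟨ε, by simp [hF]⟩
    set ε' := F.min' hFne with hε'
    have hpos : ∀ y ∈ F, 0 < y := by
      intro y hy
      simp only [hF, Finset.mem_insert, Finset.mem_image, Finset.mem_range] at hy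
      rcases hy with rfl | rfl | ⟨m, _, rfl⟩
      · exact hε
      · apply norm_pos_iff.mpr
        intro h
        exact htB (Or.inl h)
      · apply norm_pos_iff.mpr
        intro h
        apply htB
        right
        apply Set.mem_iUnion.mpr
        refine ⟨m, ?_⟩
        have := sub_eq_zero.mp h
        rw [hAv] at this
        exact this
    have hε'pos : 0 < ε' := hpos ε' (F.min'_mem hFne)
    have hmem := hS (x + t • N x)
    rw [hSlin t, Metric.mem_closure_iff] at hmem
    obtain ⟨y, hy, hdy⟩ := hmem ε' hε'pos
    rcases hy with hy0 | ⟨n, rfl⟩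
    · rw [Set.mem_singleton_iff.mp hy0, dist_zero_right] at hdy
      have : ε' ≤ ‖α + t • β‖ := F.min'_le _ (by simp [hF])
      linarith
    · rw [horb n t] at hdy
      rw [dist_eq_norm] at hdy
      by_cases hn : n < M
      · have : ε' ≤ ‖α + t • β - A t ((N ^ n) x)‖ := by
          apply F.min'_le
          simp only [hF, Finset.mem_insert, Finset.mem_image, Finset.mem_range]
          exact Or.inr (Or.inr ⟨n, hn, rfl⟩)
        linarith
      · push_neg at hn
        have h1 := hcon n hn
        rw [norm_sub_rev] at h1
        have : ε' ≤ ε := F.min'_le _ (by simp [hF])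
        linarith
  have hqv : ∀ t : ℂ, ‖t‖ < t₀ → t ∉ Bad → ∀ ε > 0, ∀ M : ℕ,
      ∃ m, M ≤ m ∧ ‖(N ^ m) x - P t (α + t • β)‖ < ε := by
    intro t ht htB ε hε M
    obtain ⟨m, hm, hlt⟩ := hq t htB (ε / (‖P t‖ + 1)) (by positivity) M
    refine ⟨m, hm, ?_⟩
    have h1 : (N ^ m) x - P t (α + t • β) = P t (A t ((N ^ m) x) - (α + t • β)) := by
      rw [map_sub, hPA t ht]
    rw [h1]
    calc ‖P t (A t ((N ^ m) x) - (α + t • β))‖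
        ≤ ‖P t‖ * ‖A t ((N ^ m) x) - (α + t • β)‖ := (P t).le_opNorm _
      _ ≤ ‖P t‖ * (ε / (‖P t‖ + 1)) := by
          exact mul_le_mul_of_nonneg_left hlt.le (norm_nonneg _)
      _ < ε := by
          rw [div_eq_mul_inv]
          have h2 : ‖P t‖ < ‖P t‖ + 1 := by linarith
          have h3 : (0:ℝ) < ‖P t‖ + 1 := by positivity
          calc ‖P t‖ * (ε * (‖P t‖ + 1)⁻¹) = ε * (‖P t‖ / (‖P t‖ + 1)) := by ring
            _ < ε * 1 := by
                apply mul_lt_mul_of_pos_left _ hε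
                exact (div_lt_one h3).mpr h2
            _ = ε := mul_one ε
  have hr0 : ∀ n, 0 ≤ r n := fun n => norm_nonneg _
  have hrcx : ∀ n, r (n+1)^2 ≤ r n * r (n+2) := by
    intro n
    have h1 := logcx N hN ((N ^ n) x)
    have e1 : (N ^ (n+1)) x = N ((N ^ n) x) := hpow n
    have e2 : (N ^ (n+2)) x = N (N ((N ^ n) x)) := by
      rw [hpow (n+1), hpow n]
    simp only [hr]
    rw [e1, e2]
    exact h1
  have hBadcompl : Dense Badᶜ := Set.Countable.dense_compl ℂ hBadc
  obtain ⟨ts, hts1, hts2⟩ := hBadcompl.exists_mem_open Metric.isOpen_ball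
    ⟨(0:ℂ), Metric.mem_ball_self ht₀⟩
  have htsn : ‖ts‖ < t₀ := mem_ball_zero_iff.mp hts2
  have hB : ∀ M : ℕ, ∃ m, M ≤ m ∧ r m ≤ ‖P ts (α + ts • β)‖ + 1 := by
    intro M
    obtain ⟨m, hm, hlt⟩ := hqv ts htsn hts1 1 one_pos M
    refine ⟨m, hm, ?_⟩
    have := norm_sub_norm_le ((N ^ m) x) (P ts (α + ts • β))
    simp only [hr]
    linarith
  obtain ⟨l, hl⟩ := exists_lim hr0 hrcx _ hB
  have hnormQ : ∀ t : ℂ, ‖t‖ < t₀ → t ∉ Bad → ‖P t (α + t • β)‖ = l := by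
    intro t ht htB
    apply eq_of_forall_dist_le
    intro ε hε
    rw [Metric.tendsto_atTop] at hl
    obtain ⟨M, hM⟩ := hl (ε/2) (by positivity)
    obtain ⟨m, hm, hlt⟩ := hqv t ht htB (ε/2) (by positivity) M
    have h1 := hM m hm
    have h2 : |r m - ‖P t (α + t • β)‖| ≤ ‖(N ^ m) x - P t (α + t • β)‖ :=
      abs_norm_sub_norm_le _ _
    rw [Real.dist_eq] at h1 ⊢
    have h3 : |‖P t (α + t • β)‖ - l| ≤ |‖P t (α + t • β)‖ - r m| + |r m - l| :=
      abs_sub_le _ _ _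
    rw [abs_sub_comm] at h2
    linarith
  have hQCont : ∀ t : ℂ, ‖t‖ < t₀ → ∀ v : H, ContinuousAt (fun s : ℂ => P s v) t := by
    intro t ht v
    have hAc : Continuous A := continuous_const.add (continuous_id.smul continuous_const)
    have h1 : ContinuousAt Ring.inverse (A t) := by
      have hu := hAunit t ht
      have h2 := NormedRing.inverse_continuousAt hu.unit
      rwa [IsUnit.unit_spec] at h2
    have h2 : ContinuousAt (fun s : ℂ => P s) t := h1.comp hAc.continuousAt
    have h3 : ContinuousAt (fun s : ℂ => ((P s, v) : (H →L[ℂ] H) × H)) t :=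
      h2.prodMk continuousAt_const
    exact (isBoundedBilinearMap_apply.continuous.continuousAt).comp h3
  have hQContF : ∀ t : ℂ, ‖t‖ < t₀ → ContinuousAt (fun s : ℂ => P s (α + s • β)) t := by
    intro t ht
    have hAc : Continuous A := continuous_const.add (continuous_id.smul continuous_const)
    have h1 : ContinuousAt Ring.inverse (A t) := by
      have hu := hAunit t ht
      have h2 := NormedRing.inverse_continuousAt hu.unit
      rwa [IsUnit.unit_spec] at h2
    have h2 : ContinuousAt (fun s : ℂ => P s) t := h1.comp hAc.continuousAt
    have hv : ContinuousAt (fun s : ℂ => α + s • β) t :=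
      continuousAt_const.add (continuousAt_id.smul continuousAt_const)
    have h3 : ContinuousAt (fun s : ℂ => ((P s, α + s • β) : (H →L[ℂ] H) × H)) t :=
      h2.prodMk hv
    exact (isBoundedBilinearMap_apply.continuous.continuousAt).comp h3
  have hIden0 : ∀ t : ℂ, ‖t‖ < t₀ → ‖P t (α + t • β)‖ = l := by
    intro t ht
    have hcl : t ∈ closure (Metric.ball (0:ℂ) t₀ ∩ Badᶜ) := by
      rw [_root_.mem_closure_iff]
      intro o ho hto
      have h1 : (o ∩ Metric.ball (0:ℂ) t₀).Nonempty :=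
        ⟨t, hto, mem_ball_zero_iff.mpr ht⟩
      obtain ⟨z, hz1, hz2⟩ := hBadcompl.exists_mem_open (ho.inter Metric.isOpen_ball) h1
      exact ⟨z, hz2.1, hz2.2, hz1⟩
    obtain ⟨u, hu, hulim⟩ := mem_closure_iff_seq_limit.mp hcl
    have hcont : ContinuousAt (fun s : ℂ => ‖P s (α + s • β)‖) t :=
      (continuous_norm.continuousAt).comp (hQContF t ht)
    have h1 : Filter.Tendsto (fun n => ‖P (u n) (α + (u n) • β)‖) atTop
        (nhds ‖P t (α + t • β)‖) := hcont.tendsto.comp hulim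
    have h2 : (fun n => ‖P (u n) (α + (u n) • β)‖) = fun _ => l := by
      funext n
      exact hnormQ (u n) (mem_ball_zero_iff.mp (hu n).1) (hu n).2
    rw [h2] at h1
    exact tendsto_nhds_unique h1 tendsto_const_nhds
  have h0t : ‖(0:ℂ)‖ < t₀ := by simpa using ht₀
  have hA0 : A 0 = 1 := by simp [hA]
  have hP0 : ∀ v : H, P 0 v = v := by
    intro v
    simp only [hP, hA0, Ring.inverse_one]
    rfl
  have hl0 : ‖α‖ = l := by
    have h1 := hIden0 0 h0t
    simpa [hP0] using h1
  set δ : H := β - N α with hδdef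
  have hQform : ∀ t : ℂ, ‖t‖ < t₀ → P t (α + t • β) = α + t • P t δ := by
    intro t ht
    apply hAinj t ht
    rw [hAP t ht, map_add, map_smul, hAP t ht, hAv t α, hδdef]
    module
  have hP2 : ∀ t : ℂ, ‖t‖ < t₀ → P t δ = δ - t • P t (N δ) := by
    intro t ht
    apply hAinj t ht
    rw [hAP t ht, map_sub, map_smul, hAP t ht, hAv t δ]
    module
  have hIden : ∀ t : ℂ, ‖t‖ < t₀ →
      2 * (inner ℂ α (t • P t δ) : ℂ).re + ‖t • P t δ‖^2 = 0 := by
    intro t ht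
    have h1 : ‖α + t • P t δ‖ = ‖α‖ := by
      rw [← hQform t ht, hIden0 t ht, hl0]
    have h2 := norm_add_sq (𝕜 := ℂ) α (t • P t δ)
    rw [h1] at h2
    simp only [RCLike.re_to_complex] at h2
    linarith
  have hsubst : ∀ t : ℂ, ‖t‖ < t₀ →
      2 * (t * (inner ℂ α δ : ℂ) - t^2 * (inner ℂ α (P t (N δ)) : ℂ)).re
        + ‖t‖^2 * ‖P t δ‖^2 = 0 := by
    intro t ht
    have e1 : (inner ℂ α (t • P t δ) : ℂ)
        = t * (inner ℂ α δ : ℂ) - t^2 * (inner ℂ α (P t (N δ)) : ℂ) := by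
      rw [inner_smul_right, hP2 t ht, inner_sub_right, inner_smul_right]
      ring
    have e2 : ‖t • P t δ‖^2 = ‖t‖^2 * ‖P t δ‖^2 := by
      rw [norm_smul, mul_pow]
    have h3 := hIden t ht
    rw [e1, e2] at h3
    exact h3
  have hψcont : ContinuousAt (fun t : ℂ => (inner ℂ α (P t (N δ)) : ℂ)) 0 :=
    ContinuousAt.inner continuousAt_const (hQCont 0 h0t (N δ))
  have hGcont : ContinuousAt (fun t : ℂ => ‖P t δ‖^2) 0 :=
    ((hQCont 0 h0t δ).norm).pow 2
  have hsw : ∀ w : ℂ, Filter.Tendsto (fun s : ℝ => (s:ℂ) * w) (nhdsWithin 0 (Set.Ioi 0)) (nhds 0) := by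
    intro w
    have h1 : Continuous (fun s : ℝ => (s:ℂ) * w) :=
      Complex.continuous_ofReal.mul continuous_const
    have h2 := (h1.tendsto 0)
    have h3 : ((0:ℝ):ℂ) * w = 0 := by simp
    rw [h3] at h2
    exact h2.mono_left nhdsWithin_le_nhds
  have hs0 : Filter.Tendsto (fun s : ℝ => s) (nhdsWithin 0 (Set.Ioi 0)) (nhds 0) :=
    tendsto_id.mono_right nhdsWithin_le_nhds |>.mono_left le_rfl |>.mono_right le_rfl
  have hnorm_sw : ∀ (w : ℂ), ‖w‖ = 1 → ∀ s : ℝ, s ∈ Set.Ioo (0:ℝ) t₀ → ‖(s:ℂ)*w‖ < t₀ := by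
    intro w hw s hs
    rw [norm_mul, hw, mul_one, Complex.norm_real, Real.norm_eq_abs, abs_of_pos hs.1]
    exact hs.2
  have hχcont : ∀ w : ℂ, ContinuousAt (fun t : ℂ => (w^2 * (inner ℂ α (P t (N δ)) : ℂ)).re) 0 :=
    fun w => Complex.continuous_re.continuousAt.comp (continuousAt_const.mul hψcont)
  have hwre : ∀ w : ℂ, ‖w‖ = 1 → (w * (inner ℂ α δ : ℂ)).re = 0 := by
    intro w hw
    have hχ : Filter.Tendsto (fun s : ℝ => (w^2 * (inner ℂ α (P ((s:ℂ)*w) (N δ)) : ℂ)).re)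
        (nhdsWithin 0 (Set.Ioi 0)) (nhds ((w^2 * (inner ℂ α (P 0 (N δ)) : ℂ)).re)) :=
      (hχcont w).tendsto.comp (hsw w)
    have hG : Filter.Tendsto (fun s : ℝ => ‖P ((s:ℂ)*w) δ‖^2)
        (nhdsWithin 0 (Set.Ioi 0)) (nhds (‖P 0 δ‖^2)) :=
      hGcont.tendsto.comp (hsw w)
    have hlim : Filter.Tendsto
        (fun s : ℝ => s * (w^2 * (inner ℂ α (P ((s:ℂ)*w) (N δ)) : ℂ)).re
          - (s/2) * ‖P ((s:ℂ)*w) δ‖^2)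
        (nhdsWithin 0 (Set.Ioi 0)) (nhds 0) := by
      have := (hs0.mul hχ).sub ((hs0.div_const 2).mul hG)
      simpa using this
    have hev : (fun s : ℝ => s * (w^2 * (inner ℂ α (P ((s:ℂ)*w) (N δ)) : ℂ)).re
          - (s/2) * ‖P ((s:ℂ)*w) δ‖^2)
        =ᶠ[nhdsWithin 0 (Set.Ioi 0)] (fun _ => (w * (inner ℂ α δ : ℂ)).re) := by
      filter_upwards [Ioo_mem_nhdsGT ht₀] with s hs
      have hsn := hnorm_sw w hw s hs
      have hid := hsubst ((s:ℂ)*w) hsn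
      have e0 : ((s:ℂ)*w) * (inner ℂ α δ : ℂ) - ((s:ℂ)*w)^2 * (inner ℂ α (P ((s:ℂ)*w) (N δ)) : ℂ)
          = (s:ℂ) * (w * (inner ℂ α δ : ℂ)) - ((s^2 : ℝ) : ℂ) * (w^2 * (inner ℂ α (P ((s:ℂ)*w) (N δ)) : ℂ)) := by
        push_cast
        ring
      rw [e0] at hid
      rw [Complex.sub_re, Complex.re_ofReal_mul, Complex.re_ofReal_mul] at hid
      have e2 : ‖(s:ℂ)*w‖^2 = s^2 := by
        rw [norm_mul, hw, mul_one, Complex.norm_real, Real.norm_eq_abs, sq_abs]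
      rw [e2] at hid
      have hs' : s ≠ 0 := ne_of_gt hs.1
      have h4 : (2*s) * (s * (w^2 * (inner ℂ α (P ((s:ℂ)*w) (N δ)) : ℂ)).re
          - (s/2) * ‖P ((s:ℂ)*w) δ‖^2)
          = (2*s) * ((w * (inner ℂ α δ : ℂ)).re) := by
        linear_combination -hid
      exact mul_left_cancel₀ (by simp [hs'] : (2*s) ≠ 0) h4
    have h5 := tendsto_nhds_unique (hlim.congr' hev) tendsto_const_nhds
    exact h5.symm
  have hc0 : (inner ℂ α δ : ℂ) = 0 := by
    have h1 := hwre 1 (by simp)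
    have h2 := hwre Complex.I (by simp)
    rw [one_mul] at h1
    rw [Complex.I_mul_re] at h2
    apply Complex.ext
    · simpa using h1
    · simpa using (neg_eq_zero.mp h2)
  have hkey2 : ∀ w : ℂ, ‖w‖ = 1 →
      ‖δ‖^2 = 2 * (w^2 * (inner ℂ α (N δ) : ℂ)).re := by
    intro w hw
    have hev : (fun s : ℝ => ‖P ((s:ℂ)*w) δ‖^2)
        =ᶠ[nhdsWithin 0 (Set.Ioi 0)]
        (fun s : ℝ => 2 * (w^2 * (inner ℂ α (P ((s:ℂ)*w) (N δ)) : ℂ)).re) := by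
      filter_upwards [Ioo_mem_nhdsGT ht₀] with s hs
      have hsn := hnorm_sw w hw s hs
      have hid := hsubst ((s:ℂ)*w) hsn
      rw [hc0] at hid
      have e0 : ((s:ℂ)*w) * 0 - ((s:ℂ)*w)^2 * (inner ℂ α (P ((s:ℂ)*w) (N δ)) : ℂ)
          = -(((s^2 : ℝ) : ℂ) * (w^2 * (inner ℂ α (P ((s:ℂ)*w) (N δ)) : ℂ))) := by
        push_cast
        ring
      rw [e0] at hid
      rw [Complex.neg_re, Complex.re_ofReal_mul] at hid
      have e2 : ‖(s:ℂ)*w‖^2 = s^2 := by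
        rw [norm_mul, hw, mul_one, Complex.norm_real, Real.norm_eq_abs, sq_abs]
      rw [e2] at hid
      have hs2 : s^2 ≠ 0 := pow_ne_zero 2 (ne_of_gt hs.1)
      have h4 : s^2 * ‖P ((s:ℂ)*w) δ‖^2
          = s^2 * (2 * (w^2 * (inner ℂ α (P ((s:ℂ)*w) (N δ)) : ℂ)).re) := by
        linear_combination hid
      exact mul_left_cancel₀ hs2 h4
    have hL1 : Filter.Tendsto (fun s : ℝ => ‖P ((s:ℂ)*w) δ‖^2)
        (nhdsWithin 0 (Set.Ioi 0)) (nhds (‖δ‖^2)) := by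
      have := hGcont.tendsto.comp (hsw w)
      simpa [hP0, Function.comp_def] using this
    have hL2 : Filter.Tendsto (fun s : ℝ => ‖P ((s:ℂ)*w) δ‖^2)
        (nhdsWithin 0 (Set.Ioi 0)) (nhds (2 * (w^2 * (inner ℂ α (N δ) : ℂ)).re)) := by
      have h6 : Filter.Tendsto (fun s : ℝ => 2 * (w^2 * (inner ℂ α (P ((s:ℂ)*w) (N δ)) : ℂ)).re)
          (nhdsWithin 0 (Set.Ioi 0)) (nhds (2 * (w^2 * (inner ℂ α (P 0 (N δ)) : ℂ)).re)) :=
        ((hχcont w).tendsto.comp (hsw w)).const_mul 2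
      rw [hP0] at h6
      exact Filter.Tendsto.congr' hev.symm h6
    exact tendsto_nhds_unique hL1 hL2
  have hδ0 : δ = 0 := by
    have h1 := hkey2 1 (by simp)
    have h2 := hkey2 Complex.I (by simp)
    rw [one_pow, one_mul] at h1
    rw [Complex.I_sq] at h2
    have h3 : ((-1 : ℂ) * (inner ℂ α (N δ) : ℂ)).re = -((inner ℂ α (N δ) : ℂ)).re := by
      simp
    rw [h3] at h2
    have h4 : ‖δ‖^2 = 0 := by linarith
    have h5 : ‖δ‖ = 0 := by
      nlinarith [norm_nonneg δ]
    exact norm_eq_zero.mp h5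
  have h9 : β - N α = 0 := by rw [← hδdef]; exact hδ0
  exact sub_eq_zero.mp h9

theorem stmt_15 {H : Type*} [NormedAddCommGroup H] [InnerProductSpace ℂ H] [CompleteSpace H]
    (N S : H →L[ℂ] H) (hN : IsStarNormal N)
    (hS : ∀ x : H, S x ∈ closure ({0} ∪ {y : H | ∃ n : ℕ, y = (N ^ n) x})) :
    S * N = N * S := by
  by_cases h0 : S = 0
  · subst h0; simp
  by_cases hm : ∃ m : ℕ, S = N ^ m
  · obtain ⟨m, rfl⟩ := hm
    exact pow_mul_comm' N m
  push_neg at hm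
  haveI hNB : Filter.NeBot (nhdsWithin (0:ℂ) {x : ℂ | IsUnit x}) := by
    have he : {x : ℂ | IsUnit x} = {(0:ℂ)}ᶜ := by
      ext z; simp [isUnit_iff_ne_zero]
    rw [he]
    exact inferInstance
  set g : Option ℕ → (H →L[ℂ] H) := fun o => o.elim S (fun m => S - N ^ m) with hg
  have hgne : ∀ o, g o ≠ 0 := by
    intro o
    cases o with
    | none => simpa [hg] using h0
    | some m =>
      simp only [hg, Option.elim]
      intro h
      exact hm m (by rwa [sub_eq_zero] at h)
  have hker : ∀ o, ((LinearMap.ker (g o : H →ₗ[ℂ] H) : Submodule ℂ H) : Set H) = {x : H | g o x = 0} := by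
    intro o
    ext z
    simp [LinearMap.mem_ker]
  have hdense : Dense (⋂ o : Option ℕ, {x : H | g o x ≠ 0}) := by
    apply dense_iInter_of_isOpen
    · intro o
      have hcl : IsClosed {x : H | g o x = 0} := isClosed_eq (g o).continuous continuous_const
      have : {x : H | g o x ≠ 0} = {x : H | g o x = 0}ᶜ := rfl
      rw [this]
      exact hcl.isOpen_compl
    · intro o
      have h1 : {x : H | g o x ≠ 0} = ((LinearMap.ker (g o : H →ₗ[ℂ] H) : Submodule ℂ H) : Set H)ᶜ := by
        rw [hker o]; rfl
      rw [h1, ← interior_eq_empty_iff_dense_compl]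
      by_contra hne
      have h2 : (interior ((LinearMap.ker (g o : H →ₗ[ℂ] H) : Submodule ℂ H) : Set H)).Nonempty :=
        Set.nonempty_iff_ne_empty.mpr hne
      have h3 := Submodule.eq_top_of_nonempty_interior' _ h2
      apply hgne o
      ext z
      have : z ∈ LinearMap.ker (g o : H →ₗ[ℂ] H) := h3 ▸ Submodule.mem_top
      simpa [LinearMap.mem_ker] using this
  have hEq : ∀ x ∈ (⋂ o : Option ℕ, {x : H | g o x ≠ 0}), S (N x) = N (S x) := by
    intro x hx
    simp only [Set.mem_iInter] at hx
    apply key N S hN hS x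
    · have := hx Option.none
      simpa [hg] using this
    · intro m
      have h4 := hx (Option.some m)
      simp only [hg, Option.elim, Set.mem_setOf_eq] at h4
      intro h
      apply h4
      rw [ContinuousLinearMap.sub_apply, h, sub_self]
  have hfun : (fun x : H => S (N x)) = (fun x => N (S x)) :=
    Continuous.ext_on hdense (S.continuous.comp N.continuous) (N.continuous.comp S.continuous) hEq
  ext x
  have := congrFun hfun x
  simpa [ContinuousLinearMap.mul_apply] using this
end
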